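/- Lemma 5 (one-iteration result for SSI-HG, stated deterministically with conditional expectations written as averages over the coordinate choice). Let σ, τ > 0, θ ∈ (0, 1], and κ = max{L12·(στn)^{1/2}, L11·σ}. Let w^{k−1}, w^k, w^{k+1} ∈ E and δ^{k−1}, δ^k ∈ F satisfy: q^k = ∇_w φ(w^{k−1}, δ^{k−1}) − (n−1)(∇_w φ(w^k, δ^k) − ∇_w φ(w^k, δ^{k−1})), and there is γ_f^{k+1} ∈ ∂f(w^{k+1}) with 0 = γ_f^{k+1} + σ^{−1}(w^{k+1} − w^k) + ∇_w φ(w^k, δ^k) + θ(∇_w φ(w^k, δ^k) − q^k). Let δ̂^{k+1} ∈ F be such that there is γ̂_g^{k+1} ∈ ∂g(δ̂^{k+1}) with 0 = γ̂_g^{k+1} + τ^{−1}(δ̂^{k+1} − δ^k) − ∇_δ φ(w^{k+1}, δ̂^{k+1}). For i ∈ {1,…,n}, let δ^{(i)} ∈ F agree with δ^k except that its i-th coordinate equals δ̂^{k+1}_i, and set q^{(i)} = ∇_w φ(w^k, δ^k) − (n−1)(∇_w φ(w^{k+1}, δ^{(i)}) − ∇_w φ(w^{k+1}, δ^k)). Then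 for every (w, δ) ∈ E × F: 0 ≥ ⟨γ_f^{k+1} + ∇_w φ(w^{k+1}, δ̂^{k+1}), w^{k+1} − w⟩ + ⟨γ̂_g^{k+1} − ∇_δ φ(w^{k+1}, δ̂^{k+1}), δ̂^{k+1} − δ⟩ + (1/n)∑_{i=1}^n ⟨w − w^{k+1}, ∇_w φ(w^{k+1}, δ^{(i)}) − q^{(i)}⟩ − θ⟨w − w^k, ∇_w φ(w^k, δ^k) − q^k⟩ + (1/(2σ))‖w − w^{k+1}‖² + ((1 − 2κ)/(2σ))‖w^{k+1} − w^k‖² − (1/(2σ))‖w − w^k‖² − (κθ/(2σ))‖w^k − w^{k−1}‖² + (1/(2τ))∑_{i=1}^n ‖δ − δ^{(i)}‖² + (1/(2τ))∑_{i=1}^n ‖δ^{(i)} − δ^k‖² − (n/(2τ))‖δ − δ^k‖² − (nκθ/(2τ))‖δ^k − δ^{k−1}‖². -/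

import Mathlib

open scoped RealInnerProductSpace

/-- `γ` is a subgradient of `h` at `x`. -/
def IsSubgradient {X : Type*} [NormedAddCommGroup X] [InnerProductSpace ℝ X]
    (h : X → ℝ) (x γ : X) : Prop :=
  ∀ u, h u ≥ h x + ⟪γ, u - x⟫

/-- The point of `PiLp 2 Fd` that agrees with `δ` in all coordinates except that its
`i`-th coordinate equals `x`. -/
def updCoord {n : ℕ} {Fd : Fin n → Type*} [∀ i, NormedAddCommGroup (Fd i)]
    (δ : PiLp 2 Fd) (i : Fin n) (x : Fd i) : PiLp 2 Fd :=
  WithLp.toLp 2 (Function.update δ i x)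

set_option maxHeartbeats 2000000 in
/-- Lemma 5: one-iteration result for SSI-HG, stated deterministically with conditional
expectations written as averages over the coordinate choice. -/
theorem ssihg_one_iteration_result
    {n : ℕ} (hn : 1 ≤ n)
    {E : Type*} [NormedAddCommGroup E] [InnerProductSpace ℝ E] [FiniteDimensional ℝ E]
    {Fd : Fin n → Type*} [∀ i, NormedAddCommGroup (Fd i)]
    [∀ i, InnerProductSpace ℝ (Fd i)] [∀ i, FiniteDimensional ℝ (Fd i)]
    (φ : ∀ i, E → Fd i → ℝ)
    (gw : ∀ i, E → Fd i → E) (gd : ∀ i, E → Fd i → Fd i)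
    (hgw : ∀ (i : Fin n) (w : E) (d : Fd i),
      HasGradientAt (fun w' => φ i w' d) (gw i w d) w)
    (hgd : ∀ (i : Fin n) (w : E) (d : Fd i),
      HasGradientAt (fun d' => φ i w d') (gd i w d) d)
    (Gw : E → PiLp 2 Fd → E)
    (hGw : ∀ w δ, Gw w δ = ∑ i, gw i w (δ i))
    (Gd : E → PiLp 2 Fd → PiLp 2 Fd)
    (hGd : ∀ w δ i, Gd w δ i = gd i w (δ i))
    (L11 L12 : ℝ) (hL11 : 0 < L11) (hL12 : 0 < L12)
    (hLw : ∀ (w w' : E) (δ : PiLp 2 Fd), ‖Gw w δ - Gw w' δ‖ ≤ L11 * ‖w - w'‖)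
    (hLwd : ∀ (w : E) (δ δ' : PiLp 2 Fd), ‖Gw w δ - Gw w δ'‖ ≤ L12 * ‖δ - δ'‖)
    (f : E → ℝ) (hf : ConvexOn ℝ Set.univ f)
    (gi : ∀ i, Fd i → ℝ) (hgi : ∀ i, ConvexOn ℝ Set.univ (gi i))
    (σ τ θ : ℝ) (hσ : 0 < σ) (hτ : 0 < τ) (hθ0 : 0 < θ) (hθ1 : θ ≤ 1)
    (κ : ℝ) (hκ : κ = max (L12 * Real.sqrt (σ * τ * (n : ℝ))) (L11 * σ))
    (wkm1 wk wk1 : E) (δkm1 δk : PiLp 2 Fd)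
    (qk : E)
    (hq : qk = Gw wkm1 δkm1 - ((n : ℝ) - 1) • (Gw wk δk - Gw wk δkm1))
    (γf : E) (hsubf : IsSubgradient f wk1 γf)
    (hupw : (0 : E) = γf + σ⁻¹ • (wk1 - wk) + Gw wk δk + θ • (Gw wk δk - qk))
    (δhat : PiLp 2 Fd)
    (γghat : PiLp 2 Fd) (hsubg : ∀ i, IsSubgradient (gi i) (δhat i) (γghat i))
    (hupd : (0 : PiLp 2 Fd) = γghat + τ⁻¹ • (δhat - δk) - Gd wk1 δhat)
    (q : Fin n → E)
    (hqi : ∀ i, q i = Gw wk δk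
      - ((n : ℝ) - 1) • (Gw wk1 (updCoord δk i (δhat i)) - Gw wk1 δk)) :
    ∀ (w : E) (δ : PiLp 2 Fd),
      0 ≥ ⟪γf + Gw wk1 δhat, wk1 - w⟫ + ⟪γghat - Gd wk1 δhat, δhat - δ⟫
        + (1 / (n : ℝ)) * ∑ i, ⟪w - wk1, Gw wk1 (updCoord δk i (δhat i)) - q i⟫
        - θ * ⟪w - wk, Gw wk δk - qk⟫
        + (1 / (2 * σ)) * ‖w - wk1‖ ^ 2
        + ((1 - 2 * κ) / (2 * σ)) * ‖wk1 - wk‖ ^ 2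
        - (1 / (2 * σ)) * ‖w - wk‖ ^ 2
        - (κ * θ / (2 * σ)) * ‖wk - wkm1‖ ^ 2
        + (1 / (2 * τ)) * ∑ i, ‖δ - updCoord δk i (δhat i)‖ ^ 2
        + (1 / (2 * τ)) * ∑ i, ‖updCoord δk i (δhat i) - δk‖ ^ 2
        - ((n : ℝ) / (2 * τ)) * ‖δ - δk‖ ^ 2
        - ((n : ℝ) * κ * θ / (2 * τ)) * ‖δk - δkm1‖ ^ 2 := by
  intro w δ
  have hn0R : (0:ℝ) < (n:ℝ) := by exact_mod_cast Nat.lt_of_lt_of_le Nat.zero_lt_one hn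
  -- solve for γf and γghat
  have hgf2 : γf + Gw wk1 δhat
      = (Gw wk1 δhat - Gw wk δk) - θ • (Gw wk δk - qk) - σ⁻¹ • (wk1 - wk) := by
    have h := hupw.symm
    rw [add_assoc, add_assoc] at h
    rw [eq_neg_of_add_eq_zero_left h]
    abel
  have hγg : γghat = Gd wk1 δhat - τ⁻¹ • (δhat - δk) :=
    eq_sub_of_add_eq (sub_eq_zero.mp hupd.symm)
  -- T1
  have hT1 : ⟪γf + Gw wk1 δhat, wk1 - w⟫
      = -⟪w - wk1, Gw wk1 δhat - Gw wk δk⟫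
        - θ * (⟪Gw wk δk - qk, wk1 - wk⟫ - ⟪Gw wk δk - qk, w - wk⟫)
        + σ⁻¹ * ⟪w - wk1, wk1 - wk⟫ := by
    rw [hgf2]
    simp only [inner_sub_left, inner_sub_right, real_inner_smul_left, real_inner_smul_right,
      inner_neg_left, inner_neg_right, real_inner_comm]
    ring
  -- T2
  have hT2 : ⟪γghat - Gd wk1 δhat, δhat - δ⟫ = -(τ⁻¹ * ⟪δhat - δk, δhat - δ⟫) := by
    rw [hγg, show Gd wk1 δhat - τ⁻¹ • (δhat - δk) - Gd wk1 δhat = -(τ⁻¹ • (δhat - δk)) from by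
      abel, inner_neg_left, real_inner_smul_left]
  -- sum identity for Gw over coordinate updates
  have hGsum : ∀ i : Fin n, Gw wk1 (updCoord δk i (δhat i))
      = Gw wk1 δk + gw i wk1 (δhat i) - gw i wk1 (δk i) := by
    intro i
    rw [hGw, hGw]
    rw [Fintype.sum_eq_add_sum_compl i (fun j => gw j wk1 (updCoord δk i (δhat i) j)),
      Fintype.sum_eq_add_sum_compl i (fun j => gw j wk1 (δk j))]
    have h1 : updCoord δk i (δhat i) i = δhat i := Function.update_self _ _ _
    have h2 : ∑ j ∈ {i}ᶜ, gw j wk1 (updCoord δk i (δhat i) j)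
        = ∑ j ∈ {i}ᶜ, gw j wk1 (δk j) := by
      refine Finset.sum_congr rfl fun j hj => ?_
      have hj' : j ≠ i := by simpa using hj
      rw [show updCoord δk i (δhat i) j = δk j from Function.update_of_ne hj' _ _]
    rw [h1, h2]
    abel
  have hsum : ∑ i, Gw wk1 (updCoord δk i (δhat i))
      = Gw wk1 δhat + ((n:ℝ) - 1) • Gw wk1 δk := by
    rw [Finset.sum_congr rfl (fun i _ => hGsum i)]
    rw [Finset.sum_sub_distrib, Finset.sum_add_distrib, Finset.sum_const, Finset.card_univ,
      Fintype.card_fin, ← hGw, ← hGw, ← Nat.cast_smul_eq_nsmul ℝ]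
    module
  have hv : ∑ i, (Gw wk1 (updCoord δk i (δhat i)) - q i)
      = (n:ℝ) • (Gw wk1 δhat - Gw wk δk) := by
    have h1 : ∀ i : Fin n, Gw wk1 (updCoord δk i (δhat i)) - q i
        = (n:ℝ) • Gw wk1 (updCoord δk i (δhat i)) - ((n:ℝ) - 1) • Gw wk1 δk - Gw wk δk := by
      intro i; rw [hqi]; module
    rw [Finset.sum_congr rfl (fun i _ => h1 i)]
    rw [Finset.sum_sub_distrib, Finset.sum_sub_distrib, ← Finset.smul_sum, hsum,
      Finset.sum_const, Finset.sum_const, Finset.card_univ, Fintype.card_fin,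
      ← Nat.cast_smul_eq_nsmul ℝ, ← Nat.cast_smul_eq_nsmul ℝ]
    module
  have hT3 : 1 / (n : ℝ) * ∑ i, ⟪w - wk1, Gw wk1 (updCoord δk i (δhat i)) - q i⟫
      = ⟪w - wk1, Gw wk1 δhat - Gw wk δk⟫ := by
    rw [← inner_sum, hv, real_inner_smul_right, one_div, inv_mul_cancel_left₀ hn0R.ne']
  -- coordinate norm identities
  have hS2 : ∑ i, ‖updCoord δk i (δhat i) - δk‖ ^ 2 = ‖δhat - δk‖ ^ 2 := by
    have hS2i : ∀ i : Fin n, ‖updCoord δk i (δhat i) - δk‖ ^ 2 = ‖δhat i - δk i‖ ^ 2 := by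
      intro i
      rw [PiLp.norm_sq_eq_of_L2]
      rw [Finset.sum_eq_single i]
      · rw [show (updCoord δk i (δhat i) - δk) i = δhat i - δk i from by
          simp [updCoord, PiLp.sub_apply]]
      · intro j _ hj
        rw [show (updCoord δk i (δhat i) - δk) j = 0 from by
          simp [updCoord, PiLp.sub_apply, Function.update_of_ne hj]]
        simp
      · simp
    rw [Finset.sum_congr rfl (fun i _ => hS2i i), PiLp.norm_sq_eq_of_L2]
    exact Finset.sum_congr rfl fun i _ => by rw [PiLp.sub_apply]
  have hS1 : ∑ i, ‖δ - updCoord δk i (δhat i)‖ ^ 2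
      = ((n:ℝ) - 1) * ‖δ - δk‖ ^ 2 + ‖δ - δhat‖ ^ 2 := by
    have hS1i : ∀ i : Fin n, ‖δ - updCoord δk i (δhat i)‖ ^ 2
        = ‖δ - δk‖ ^ 2 - ‖δ i - δk i‖ ^ 2 + ‖δ i - δhat i‖ ^ 2 := by
      intro i
      rw [PiLp.norm_sq_eq_of_L2, PiLp.norm_sq_eq_of_L2 _ (δ - δk)]
      rw [Fintype.sum_eq_add_sum_compl i (fun j => ‖(δ - updCoord δk i (δhat i)) j‖ ^ 2),
        Fintype.sum_eq_add_sum_compl i (fun j => ‖(δ - δk) j‖ ^ 2)]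
      have h1 : (δ - updCoord δk i (δhat i)) i = δ i - δhat i := by
        simp [updCoord, PiLp.sub_apply]
      have h2 : ∑ j ∈ {i}ᶜ, ‖(δ - updCoord δk i (δhat i)) j‖ ^ 2
          = ∑ j ∈ {i}ᶜ, ‖(δ - δk) j‖ ^ 2 := by
        refine Finset.sum_congr rfl fun j hj => ?_
        have hj' : j ≠ i := by simpa using hj
        simp [updCoord, PiLp.sub_apply, Function.update_of_ne hj']
      have h3 : (δ - δk) i = δ i - δk i := rfl
      rw [h1, h2, h3]
      ring
    rw [Finset.sum_congr rfl (fun i _ => hS1i i)]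
    rw [Finset.sum_add_distrib, Finset.sum_sub_distrib, Finset.sum_const, Finset.card_univ,
      Fintype.card_fin, nsmul_eq_mul]
    have h4 : ∑ i, ‖δ i - δk i‖ ^ 2 = ‖δ - δk‖ ^ 2 := by
      rw [PiLp.norm_sq_eq_of_L2]
      exact Finset.sum_congr rfl fun i _ => by rw [PiLp.sub_apply]
    have h5 : ∑ i, ‖δ i - δhat i‖ ^ 2 = ‖δ - δhat‖ ^ 2 := by
      rw [PiLp.norm_sq_eq_of_L2]
      exact Finset.sum_congr rfl fun i _ => by rw [PiLp.sub_apply]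
    rw [h4, h5]; ring
  -- quadratic expansions
  have hwq : ‖w - wk‖ ^ 2 = ‖w - wk1‖ ^ 2 + 2 * ⟪w - wk1, wk1 - wk⟫ + ‖wk1 - wk‖ ^ 2 := by
    have h := norm_add_sq_real (w - wk1) (wk1 - wk)
    rw [sub_add_sub_cancel] at h
    linarith [h]
  have hdq : ‖δ - δk‖ ^ 2 = ‖δ - δhat‖ ^ 2 - 2 * ⟪δhat - δk, δhat - δ⟫ + ‖δhat - δk‖ ^ 2 := by
    have h := norm_add_sq_real (δ - δhat) (δhat - δk)
    rw [sub_add_sub_cancel] at h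
    have hc : ⟪δ - δhat, δhat - δk⟫ = -⟪δhat - δk, δhat - δ⟫ := by
      rw [real_inner_comm, ← neg_sub δhat δ, inner_neg_right]
    linarith [h, hc]
  have e4 : ⟪w - wk, Gw wk δk - qk⟫ = ⟪Gw wk δk - qk, w - wk⟫ := real_inner_comm _ _
  -- bound on the hybrid-gradient error term
  have hΔid : Gw wk δk - qk
      = (n:ℝ) • (Gw wk δk - Gw wk δkm1) + (Gw wk δkm1 - Gw wkm1 δkm1) := by
    rw [hq]; module
  have hΔ : ‖Gw wk δk - qk‖ ≤ (n:ℝ) * L12 * ‖δk - δkm1‖ + L11 * ‖wk - wkm1‖ := by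
    rw [hΔid]
    refine le_trans (norm_add_le _ _) ?_
    have h1 : ‖(n:ℝ) • (Gw wk δk - Gw wk δkm1)‖ ≤ (n:ℝ) * (L12 * ‖δk - δkm1‖) := by
      rw [norm_smul, Real.norm_natCast]
      exact mul_le_mul_of_nonneg_left (hLwd wk δk δkm1) (Nat.cast_nonneg n)
    have h2 := hLw wk wkm1 δkm1
    linarith
  have hcs : -(‖Gw wk δk - qk‖ * ‖wk1 - wk‖) ≤ ⟪Gw wk δk - qk, wk1 - wk⟫ := by
    have := abs_real_inner_le_norm (Gw wk δk - qk) (wk1 - wk)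
    have := neg_abs_le ⟪Gw wk δk - qk, wk1 - wk⟫
    linarith
  have hX0 : (0:ℝ) ≤ ‖wk1 - wk‖ := norm_nonneg _
  have hy0 : (0:ℝ) ≤ ‖wk - wkm1‖ := norm_nonneg _
  have he0 : (0:ℝ) ≤ ‖δk - δkm1‖ := norm_nonneg _
  have hP : -(θ * (((n:ℝ) * L12 * ‖δk - δkm1‖ + L11 * ‖wk - wkm1‖) * ‖wk1 - wk‖))
      ≤ θ * ⟪Gw wk δk - qk, wk1 - wk⟫ := by
    have h1 : ‖Gw wk δk - qk‖ * ‖wk1 - wk‖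
        ≤ ((n:ℝ) * L12 * ‖δk - δkm1‖ + L11 * ‖wk - wkm1‖) * ‖wk1 - wk‖ :=
      mul_le_mul_of_nonneg_right hΔ hX0
    have h2 : -(((n:ℝ) * L12 * ‖δk - δkm1‖ + L11 * ‖wk - wkm1‖) * ‖wk1 - wk‖)
        ≤ ⟪Gw wk δk - qk, wk1 - wk⟫ := le_trans (by linarith) hcs
    have h3 := mul_le_mul_of_nonneg_left h2 hθ0.le
    linarith [h3]
  -- κ facts and Young inequalities
  have hκ1 : L12 * Real.sqrt (σ * τ * (n:ℝ)) ≤ κ := hκ ▸ le_max_left _ _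
  have hκ2 : L11 * σ ≤ κ := hκ ▸ le_max_right _ _
  have hκpos : (0:ℝ) < κ := lt_of_lt_of_le (mul_pos hL11 hσ) hκ2
  have hstn : (0:ℝ) < σ * τ * (n:ℝ) := by positivity
  have hr0 : (0:ℝ) < Real.sqrt (σ * τ * (n:ℝ)) := Real.sqrt_pos.mpr hstn
  have hr2 : Real.sqrt (σ * τ * (n:ℝ)) ^ 2 = σ * τ * (n:ℝ) := Real.sq_sqrt hstn.le
  have hamgm : 2 * Real.sqrt (σ * τ * (n:ℝ)) * (‖wk1 - wk‖ * ‖δk - δkm1‖)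
      ≤ τ * ‖wk1 - wk‖ ^ 2 + (n:ℝ) * σ * ‖δk - δkm1‖ ^ 2 := by
    have hrt : Real.sqrt τ ^ 2 = τ := Real.sq_sqrt hτ.le
    have hrs : Real.sqrt ((n:ℝ) * σ) ^ 2 = (n:ℝ) * σ := Real.sq_sqrt (by positivity)
    have hprod : Real.sqrt τ * Real.sqrt ((n:ℝ) * σ) = Real.sqrt (σ * τ * (n:ℝ)) := by
      rw [← Real.sqrt_mul hτ.le]
      congr 1
      ring
    have expand : (Real.sqrt τ * ‖wk1 - wk‖ - Real.sqrt ((n:ℝ) * σ) * ‖δk - δkm1‖) ^ 2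
        = Real.sqrt τ ^ 2 * ‖wk1 - wk‖ ^ 2
          - 2 * (Real.sqrt τ * Real.sqrt ((n:ℝ) * σ)) * (‖wk1 - wk‖ * ‖δk - δkm1‖)
          + Real.sqrt ((n:ℝ) * σ) ^ 2 * ‖δk - δkm1‖ ^ 2 := by ring
    rw [hrt, hrs, hprod] at expand
    linarith [sq_nonneg (Real.sqrt τ * ‖wk1 - wk‖ - Real.sqrt ((n:ℝ) * σ) * ‖δk - δkm1‖), expand]
  have key : 2 * σ * τ * (θ * (((n:ℝ) * L12 * ‖δk - δkm1‖ + L11 * ‖wk - wkm1‖) * ‖wk1 - wk‖))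
      ≤ 2 * τ * κ * ‖wk1 - wk‖ ^ 2 + τ * κ * θ * ‖wk - wkm1‖ ^ 2
        + (n:ℝ) * σ * κ * θ * ‖δk - δkm1‖ ^ 2 := by
    have h1 : θ * L12 * Real.sqrt (σ * τ * (n:ℝ))
          * (2 * Real.sqrt (σ * τ * (n:ℝ)) * (‖wk1 - wk‖ * ‖δk - δkm1‖))
        ≤ θ * L12 * Real.sqrt (σ * τ * (n:ℝ))
          * (τ * ‖wk1 - wk‖ ^ 2 + (n:ℝ) * σ * ‖δk - δkm1‖ ^ 2) :=
      mul_le_mul_of_nonneg_left hamgm (by positivity)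
    have h2 : L12 * Real.sqrt (σ * τ * (n:ℝ))
          * (θ * (τ * ‖wk1 - wk‖ ^ 2 + (n:ℝ) * σ * ‖δk - δkm1‖ ^ 2))
        ≤ κ * (θ * (τ * ‖wk1 - wk‖ ^ 2 + (n:ℝ) * σ * ‖δk - δkm1‖ ^ 2)) :=
      mul_le_mul_of_nonneg_right hκ1 (by positivity)
    have h3 : θ * L12 * Real.sqrt (σ * τ * (n:ℝ))
          * (2 * Real.sqrt (σ * τ * (n:ℝ)) * (‖wk1 - wk‖ * ‖δk - δkm1‖))
        = 2 * θ * L12 * Real.sqrt (σ * τ * (n:ℝ)) ^ 2 * (‖wk1 - wk‖ * ‖δk - δkm1‖) := by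
      ring
    rw [hr2] at h3
    have h4 : L11 * σ * (2 * τ * θ * (‖wk - wkm1‖ * ‖wk1 - wk‖))
        ≤ κ * (2 * τ * θ * (‖wk - wkm1‖ * ‖wk1 - wk‖)) :=
      mul_le_mul_of_nonneg_right hκ2 (by positivity)
    have h5 : (0:ℝ) ≤ τ * θ * κ * (‖wk1 - wk‖ - ‖wk - wkm1‖) ^ 2 := by positivity
    have h6 : (0:ℝ) ≤ 2 * τ * ((1 - θ) * (κ * ‖wk1 - wk‖ ^ 2)) :=
      mul_nonneg (by positivity)
        (mul_nonneg (by linarith) (mul_nonneg hκpos.le (sq_nonneg _)))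
    nlinarith [h1, h2, h3, h4, h5, h6]
  have hbound : θ * (((n:ℝ) * L12 * ‖δk - δkm1‖ + L11 * ‖wk - wkm1‖) * ‖wk1 - wk‖)
      ≤ κ / σ * ‖wk1 - wk‖ ^ 2 + κ * θ / (2 * σ) * ‖wk - wkm1‖ ^ 2
        + (n:ℝ) * κ * θ / (2 * τ) * ‖δk - δkm1‖ ^ 2 := by
    rw [← sub_nonneg]
    have heq : κ / σ * ‖wk1 - wk‖ ^ 2 + κ * θ / (2 * σ) * ‖wk - wkm1‖ ^ 2
          + (n:ℝ) * κ * θ / (2 * τ) * ‖δk - δkm1‖ ^ 2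
          - θ * (((n:ℝ) * L12 * ‖δk - δkm1‖ + L11 * ‖wk - wkm1‖) * ‖wk1 - wk‖)
        = (2 * τ * κ * ‖wk1 - wk‖ ^ 2 + τ * κ * θ * ‖wk - wkm1‖ ^ 2
            + (n:ℝ) * σ * κ * θ * ‖δk - δkm1‖ ^ 2
            - 2 * σ * τ * (θ * (((n:ℝ) * L12 * ‖δk - δkm1‖ + L11 * ‖wk - wkm1‖) * ‖wk1 - wk‖)))
          / (2 * σ * τ) := by
      field_simp
    rw [heq]
    apply div_nonneg _ (by positivity)
    linarith [key]
  rw [hT1, hT2, hT3, e4, hS1, hS2, hwq, hdq]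
  ring_nf at hP hbound ⊢
  linarith [hP, hbound]
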